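/- arXiv:2507.02422 — 4 statements merged into one kernel-verified Lean document; each statement's English description precedes it below -/
import Mathlib

section
/- Let n, m ≥ 1, let H be a Hermitian complex matrix indexed by Fin n × Fin m all of whose eigenvalues lie in an interval I ⊆ ℝ, let f : ℝ → ℝ be convex on I, and let ρ be an n×n density matrix (positive semidefinite with Tr ρ = 1) with positive semidefinite square root √ρ. Then the matrix K := Tr₁((√ρ ⊗ 1) H (√ρ ⊗ 1)) is Hermitian with all eigenvalues in I, and Tr f(K) ≤ Tr(√ρ · (Tr₂ f(H)) · √ρ). -/
open Matrix
open scoped ComplexOrder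

/-- The partial trace over the first factor: `(Tr₁ X)_{j,l} = ∑ᵢ X_{(i,j),(i,l)}`. -/
noncomputable def ptrace1 {n m : ℕ} (X : Matrix (Fin n × Fin m) (Fin n × Fin m) ℂ) :
    Matrix (Fin m) (Fin m) ℂ :=
  Matrix.of fun j l => ∑ i : Fin n, X (i, j) (i, l)

/-- The partial trace over the second factor: `(Tr₂ X)_{i,k} = ∑ⱼ X_{(i,j),(k,j)}`. -/
noncomputable def ptrace2 {n m : ℕ} (X : Matrix (Fin n × Fin m) (Fin n × Fin m) ℂ) :
    Matrix (Fin n) (Fin n) ℂ :=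
  Matrix.of fun i k => ∑ j : Fin m, X (i, j) (k, j)

/-- `a ⊗ 1`, with entries `(a ⊗ 1)_{(i,j),(k,l)} = a_{i,k} δ_{j,l}`. -/
noncomputable def tensorOne {n m : ℕ} (a : Matrix (Fin n) (Fin n) ℂ) :
    Matrix (Fin n × Fin m) (Fin n × Fin m) ℂ :=
  Matrix.of fun p q => a p.1 q.1 * (if p.2 = q.2 then 1 else 0)

/-- `g` applied to a Hermitian matrix via the functional calculus
(`g(A) = ∑ᵢ g(λᵢ) Pᵢ` for the spectral decomposition `A = ∑ᵢ λᵢ Pᵢ`). -/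
noncomputable def matFun {k : Type*} [Fintype k] [DecidableEq k]
    {A : Matrix k k ℂ} (hA : A.IsHermitian) (g : ℝ → ℝ) : Matrix k k ℂ := hA.cfc g

/-- `1 ⊗ U`. -/
noncomputable def oneTensor {n m : ℕ} (U : Matrix (Fin m) (Fin m) ℂ) :
    Matrix (Fin n × Fin m) (Fin n × Fin m) ℂ :=
  Matrix.of fun p q => (if p.1 = q.1 then 1 else 0) * U p.2 q.2

lemma ptrace1_isHermitian {n m : ℕ} {X : Matrix (Fin n × Fin m) (Fin n × Fin m) ℂ}
    (hX : X.IsHermitian) : (ptrace1 X).IsHermitian := by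
  ext j l
  simp only [conjTranspose_apply, ptrace1, of_apply, star_sum]
  exact Finset.sum_congr rfl fun i _ => hX.apply (i, j) (i, l)

lemma tensorOne_isHermitian {n m : ℕ} {a : Matrix (Fin n) (Fin n) ℂ}
    (ha : a.IsHermitian) : (tensorOne a (m := m)).IsHermitian := by
  ext p q
  simp only [conjTranspose_apply, tensorOne, of_apply, star_mul']
  rw [ha.apply]
  by_cases h : p.2 = q.2 <;> simp [h, eq_comm, mul_comm]

lemma tensorOne_mul {n m : ℕ} (a b : Matrix (Fin n) (Fin n) ℂ) :
    tensorOne a * tensorOne b = tensorOne (a * b) (m := m) := by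
  ext p q
  simp only [mul_apply, tensorOne, of_apply, Fintype.sum_prod_type]
  rw [Finset.sum_comm]
  by_cases h : p.2 = q.2 <;> simp [h, mul_apply, Finset.sum_ite_eq, mul_assoc]

lemma ptrace1_tensorOne {n m : ℕ} (a : Matrix (Fin n) (Fin n) ℂ) :
    ptrace1 (tensorOne a (m := m)) = a.trace • (1 : Matrix (Fin m) (Fin m) ℂ) := by
  ext j l
  by_cases h : j = l <;>
    simp [ptrace1, tensorOne, trace, Matrix.one_apply, diag, h]

lemma trace_ptrace1 {n m : ℕ} (X : Matrix (Fin n × Fin m) (Fin n × Fin m) ℂ) :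
    (ptrace1 X).trace = X.trace := by
  simp only [ptrace1, trace, diag, of_apply, Fintype.sum_prod_type]
  exact Finset.sum_comm ..

lemma trace_mul_tensorOne {n m : ℕ} (F : Matrix (Fin n × Fin m) (Fin n × Fin m) ℂ)
    (a : Matrix (Fin n) (Fin n) ℂ) :
    (F * tensorOne a).trace = (ptrace2 F * a).trace := by
  simp only [trace, diag, mul_apply, ptrace2, of_apply, tensorOne, Fintype.sum_prod_type,
    mul_ite, mul_one, mul_zero, Finset.sum_ite_eq, Finset.sum_ite_eq', Finset.mem_univ,
    if_true, Finset.sum_mul]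
  congr 1; ext i
  exact Finset.sum_comm ..

lemma diag_conj_entry {k p : Type*} [Fintype k] [DecidableEq k] [Fintype p]
    (C : Matrix k p ℂ) (d : k → ℂ) (q : p) :
    (Cᴴ * Matrix.diagonal d * C) q q = ∑ α, d α * (Complex.normSq (C α q) : ℂ) := by
  simp only [mul_apply, conjTranspose_apply, diagonal_apply, ite_mul, zero_mul,
    Finset.sum_ite_eq, Finset.mem_univ, if_true, Finset.sum_mul]
  rw [Finset.sum_comm]
  refine Finset.sum_congr rfl fun α _ => ?_
  rw [Finset.sum_eq_single α (by intro b _ hb; simp [Ne.symm hb]) (by simp)]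
  simp [Complex.normSq_eq_conj_mul_self]
  ring

lemma pt_sum {n m : ℕ} (X : Matrix (Fin n × Fin m) (Fin n × Fin m) ℂ)
    (U : Matrix (Fin m) (Fin m) ℂ) (j : Fin m) :
    ∑ i : Fin n, ((oneTensor (n := n) U)ᴴ * X * oneTensor (n := n) U) (i, j) (i, j)
      = (Uᴴ * ptrace1 X * U) j j := by
  simp only [mul_apply, conjTranspose_apply, oneTensor, ptrace1, of_apply,
    Fintype.sum_prod_type, star_mul', apply_ite (star : ℂ → ℂ), star_one, star_zero,
    mul_ite, mul_one, mul_zero, ite_mul, zero_mul, one_mul,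
    Finset.sum_ite_eq, Finset.sum_ite_eq', Finset.mem_univ, if_true,
    Finset.sum_mul, Finset.mul_sum]
  simp only [Finset.sum_ite_irrel, Finset.sum_const_zero, Finset.sum_ite_eq',
    Finset.mem_univ, if_true]
  rw [Finset.sum_comm]
  refine Finset.sum_congr rfl fun a _ => ?_
  rw [Finset.sum_comm]

/-- **Jensen's inequality for partial traces (Carlen–Frank–Larson).**
For `n, m ≥ 1`, a Hermitian `H` on `ℂⁿ ⊗ ℂᵐ` all of whose eigenvalues lie in an interval
`I ⊆ ℝ`, a function `f : ℝ → ℝ` convex on `I`, and a density matrix `ρ` (positive semidefinite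
of trace `1`) with positive semidefinite square root `s` (`s * s = ρ`), the matrix
`K = Tr₁((√ρ ⊗ 1) H (√ρ ⊗ 1))` is Hermitian with all eigenvalues in `I`, and
`Tr f(K) ≤ Tr(√ρ · (Tr₂ f(H)) · √ρ)`. -/
theorem trace_jensen_partial_trace_density_matrix {n m : ℕ} (hn : 1 ≤ n) (hm : 1 ≤ m)
    {H : Matrix (Fin n × Fin m) (Fin n × Fin m) ℂ} (hH : H.IsHermitian)
    (I : Set ℝ) (hspec : ∀ i, hH.eigenvalues i ∈ I)
    (f : ℝ → ℝ) (hconv : ConvexOn ℝ I f)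
    {ρ : Matrix (Fin n) (Fin n) ℂ} (hρ : ρ.PosSemidef) (hρtr : ρ.trace = 1)
    {s : Matrix (Fin n) (Fin n) ℂ} (hs : s.PosSemidef) (hssq : s * s = ρ) :
    ∃ hK : (ptrace1 (tensorOne s * H * tensorOne s)).IsHermitian,
      (∀ j, hK.eigenvalues j ∈ I) ∧
        (matFun hK f).trace ≤ (s * ptrace2 (matFun hH f) * s).trace := by
  classical
  have hsH : s.IsHermitian := hs.1
  set T : Matrix (Fin n × Fin m) (Fin n × Fin m) ℂ := tensorOne s with hTdef
  have hT : T.IsHermitian := tensorOne_isHermitian hsH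
  have hTHT : (T * H * T).IsHermitian := by
    show _ = _
    rw [conjTranspose_mul, conjTranspose_mul, hT.eq, hH.eq, mul_assoc]
  have hK : (ptrace1 (T * H * T)).IsHermitian := ptrace1_isHermitian hTHT
  set μ : Fin m → ℝ := hK.eigenvalues with hμdef
  set lam : Fin n × Fin m → ℝ := hH.eigenvalues with hlamdef
  set U : Matrix (Fin m) (Fin m) ℂ := (hK.eigenvectorUnitary : Matrix (Fin m) (Fin m) ℂ) with hUdef
  set V : Matrix (Fin n × Fin m) (Fin n × Fin m) ℂ := (hH.eigenvectorUnitary : Matrix (Fin n × Fin m) (Fin n × Fin m) ℂ) with hVdef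
  set E : Matrix (Fin n × Fin m) (Fin n × Fin m) ℂ := oneTensor (n := n) U with hEdef
  set C : Matrix (Fin n × Fin m) (Fin n × Fin m) ℂ := star V * (T * E) with hCdef
  set w : Fin m → Fin n × (Fin n × Fin m) → ℝ :=
    fun j q => Complex.normSq (C q.2 (q.1, j)) with hwdef
  -- conjugation rearrangement
  have conj_eq : ∀ d : Fin n × Fin m → ℂ,
      Eᴴ * (T * (V * diagonal d * star V) * T) * E = Cᴴ * diagonal d * C := by
    intro d
    have hCH : Cᴴ = Eᴴ * T * V := by
      rw [hCdef, conjTranspose_mul, conjTranspose_mul, ← hT.eq]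
      simp [star_eq_conjTranspose, mul_assoc, hT.eq]
    rw [hCH, hCdef]
    simp only [star_eq_conjTranspose, mul_assoc]
  -- master identity
  have main : ∀ (d : Fin n × Fin m → ℂ) (j : Fin m),
      (Uᴴ * ptrace1 (T * (V * diagonal d * star V) * T) * U) j j
        = ∑ q : Fin n × (Fin n × Fin m), d q.2 * (Complex.normSq (C q.2 (q.1, j)) : ℂ) := by
    intro d j
    rw [← pt_sum, conj_eq d]
    rw [Fintype.sum_prod_type]
    exact Finset.sum_congr rfl fun i _ => diag_conj_entry C d (i, j)
  -- weights sum to one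
  have hUU : star U * U = 1 := (Matrix.mem_unitaryGroup_iff').mp hK.eigenvectorUnitary.2
  have hUU' : U * star U = 1 := (Matrix.mem_unitaryGroup_iff).mp hK.eigenvectorUnitary.2
  have hVV : V * star V = 1 := (Matrix.mem_unitaryGroup_iff).mp hH.eigenvectorUnitary.2
  have hA1c : ∀ j, (1 : ℂ) = ∑ q : Fin n × (Fin n × Fin m), (w j q : ℂ) := by
    intro j
    have e1 : T * (V * diagonal (fun _ => (1 : ℂ)) * star V) * T = tensorOne ρ := by
      rw [diagonal_one, mul_one, hVV, mul_one, hTdef, tensorOne_mul, hssq]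
    have e2 := main (fun _ => (1 : ℂ)) j
    rw [e1, ptrace1_tensorOne, hρtr, one_smul, mul_one, ← star_eq_conjTranspose, hUU] at e2
    simpa [Matrix.one_apply, hwdef] using e2
  have hA1 : ∀ j, ∑ q : Fin n × (Fin n × Fin m), w j q = 1 := by
    intro j
    have := (hA1c j).symm
    exact_mod_cast this
  -- eigenvalue decomposition
  have hBc : ∀ j, ((μ j : ℝ) : ℂ)
      = ∑ q : Fin n × (Fin n × Fin m), (lam q.2 : ℂ) * (w j q : ℂ) := by
    intro j
    have h1 : star (hK.eigenvectorUnitary : Matrix (Fin m) (Fin m) ℂ) * ptrace1 (T * H * T) *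
        (hK.eigenvectorUnitary : Matrix (Fin m) (Fin m) ℂ) = diagonal (RCLike.ofReal ∘ hK.eigenvalues) := by
      have := hK.conjStarAlgAut_star_eigenvectorUnitary
      rwa [Unitary.conjStarAlgAut_apply, Unitary.coe_star, star_star] at this
    have h2 : T * H * T = T * (V * diagonal (RCLike.ofReal ∘ lam) * star V) * T := by
      have := hH.spectral_theorem
      rw [Unitary.conjStarAlgAut_apply] at this
      rw [← this]
    have h3 := main (RCLike.ofReal ∘ lam) j
    rw [star_eq_conjTranspose, ← hUdef, ← hμdef] at h1
    rw [← h2, h1] at h3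
    simpa [hwdef] using h3
  have hB : ∀ j, μ j = ∑ q : Fin n × (Fin n × Fin m), w j q * lam q.2 := by
    intro j
    have h := hBc j
    have h2 : ((μ j : ℝ) : ℂ) = ((∑ q : Fin n × (Fin n × Fin m), w j q * lam q.2 : ℝ) : ℂ) := by
      rw [h]
      push_cast
      exact Finset.sum_congr rfl fun q _ => by ring
    exact_mod_cast h2
  refine ⟨hK, ?_, ?_⟩
  · intro j
    have := hconv.1.sum_mem (t := Finset.univ)
      (fun q _ => Complex.normSq_nonneg _) (hA1 j) (fun q _ => hspec q.2)
    show μ j ∈ I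
    rw [hB j]
    simpa [smul_eq_mul] using this
  · have lhs_eq : (matFun hK f).trace = ∑ j, ((f (μ j) : ℝ) : ℂ) := by
      show (U * diagonal (RCLike.ofReal ∘ f ∘ μ) * star U).trace = _
      rw [trace_mul_cycle, hUU, one_mul, trace_diagonal]
      rfl
    have rhs_eq : (s * ptrace2 (matFun hH f) * s).trace
        = ∑ j, ∑ q : Fin n × (Fin n × Fin m), ((f (lam q.2) : ℝ) : ℂ) * (w j q : ℂ) := by
      set F := matFun hH f with hFdef
      have hF : F = V * diagonal (RCLike.ofReal ∘ f ∘ lam) * star V := rfl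
      have c1 : (s * ptrace2 F * s).trace = (ptrace2 F * ρ).trace := by
        rw [trace_mul_cycle, hssq, trace_mul_comm]
      have c2 : (ptrace2 F * ρ).trace = (T * F * T).trace := by
        rw [← trace_mul_tensorOne, ← hssq, ← tensorOne_mul, ← hTdef, ← mul_assoc,
          trace_mul_cycle]
      have c3 : (star U * ptrace1 (T * F * T) * U).trace = (T * F * T).trace := by
        rw [trace_mul_cycle, hUU', one_mul, trace_ptrace1]
      rw [c1, c2, ← c3]
      show ∑ j, (star U * ptrace1 (T * F * T) * U) j j = _
      refine Finset.sum_congr rfl fun j _ => ?_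
      rw [star_eq_conjTranspose, hF]
      exact main (RCLike.ofReal ∘ f ∘ lam) j
    rw [lhs_eq, rhs_eq]
    have jensen : ∀ j, f (μ j) ≤ ∑ q : Fin n × (Fin n × Fin m), f (lam q.2) * w j q := by
      intro j
      have h := hconv.map_sum_le (t := Finset.univ) (w := w j) (p := fun q => lam q.2)
        (fun q _ => Complex.normSq_nonneg _) (hA1 j) (fun q _ => hspec q.2)
      have h2 : ∑ q : Fin n × (Fin n × Fin m), w j q • lam q.2 = μ j := by
        rw [hB j]; simp [smul_eq_mul]
      rw [h2] at h
      refine h.trans (le_of_eq ?_)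
      exact Finset.sum_congr rfl fun q _ => by simp [smul_eq_mul, mul_comm]
    have real_ineq : ∑ j, f (μ j)
        ≤ ∑ j, ∑ q : Fin n × (Fin n × Fin m), f (lam q.2) * w j q :=
      Finset.sum_le_sum fun j _ => jensen j
    exact_mod_cast real_ineq
end

section
/- Let n, m ≥ 1, let H be a Hermitian complex matrix indexed by Fin n × Fin m, let f : ℝ → ℝ be a continuous convex function with f(0) = 0, and let a be an n×n complex matrix with Tr(a* a) ≤ 1. Then the matrix K := Tr₁((a* ⊗ 1) H (a ⊗ 1)) is Hermitian, and Tr f(K) ≤ Tr(a* · (Tr₂ f(H)) · a). -/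
open Matrix
open scoped ComplexOrder

lemma tensorOne_conjTranspose {n m : ℕ} (a : Matrix (Fin n) (Fin n) ℂ) :
    (tensorOne (n := n) (m := m) a)ᴴ = tensorOne aᴴ := by
  ext p q
  by_cases h : p.2 = q.2 <;>
    simp [tensorOne, conjTranspose_apply, h, eq_comm, star_mul']

lemma cfc_trace {k : Type*} [Fintype k] [DecidableEq k] {A : Matrix k k ℂ} (hA : A.IsHermitian)
    (g : ℝ → ℝ) : (hA.cfc g).trace = ∑ i, (g (hA.eigenvalues i) : ℂ) := by
  rw [Matrix.IsHermitian.cfc, Unitary.conjStarAlgAut_apply, Matrix.trace_mul_cycle,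
    Matrix.UnitaryGroup.star_mul_self, one_mul, Matrix.trace_diagonal]
  rfl

lemma unit_col {k : Type*} [Fintype k] [DecidableEq k] {A : Matrix k k ℂ} (hA : A.IsHermitian)
    (i j : k) :
    ∑ l, (starRingEnd ℂ) ((hA.eigenvectorUnitary : Matrix k k ℂ) l i) *
      (hA.eigenvectorUnitary : Matrix k k ℂ) l j = if i = j then 1 else 0 := by
  have h : (star (hA.eigenvectorUnitary : Matrix k k ℂ) * (hA.eigenvectorUnitary : Matrix k k ℂ)) i j
      = (1 : Matrix k k ℂ) i j := by rw [Matrix.UnitaryGroup.star_mul_self]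
  simpa [Matrix.mul_apply, Matrix.one_apply, Matrix.star_apply] using h

lemma unit_row {k : Type*} [Fintype k] [DecidableEq k] {A : Matrix k k ℂ} (hA : A.IsHermitian)
    (i j : k) :
    ∑ l, (hA.eigenvectorUnitary : Matrix k k ℂ) i l *
      (starRingEnd ℂ) ((hA.eigenvectorUnitary : Matrix k k ℂ) j l) = if i = j then 1 else 0 := by
  have h : ((hA.eigenvectorUnitary : Matrix k k ℂ) * star (hA.eigenvectorUnitary : Matrix k k ℂ)) i j
      = (1 : Matrix k k ℂ) i j := by
    rw [mul_eq_one_comm.mp (Matrix.UnitaryGroup.star_mul_self hA.eigenvectorUnitary)]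
  simpa [Matrix.mul_apply, Matrix.one_apply, Matrix.star_apply] using h

lemma jensen_sub {ι : Type*} [Fintype ι] {f : ℝ → ℝ} (hconv : ConvexOn ℝ Set.univ f)
    (hf0 : f 0 = 0) (w p : ι → ℝ) (hw : ∀ i, 0 ≤ w i) (hw1 : ∑ i, w i ≤ 1) :
    f (∑ i, w i * p i) ≤ ∑ i, w i * f (p i) := by
  classical
  set s := ∑ i, w i with hs
  have hs0 : 0 ≤ s := Finset.sum_nonneg fun i _ => hw i
  rcases eq_or_lt_of_le hs0 with h | h
  · have hz : ∀ i ∈ Finset.univ, w i = 0 :=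
      (Finset.sum_eq_zero_iff_of_nonneg (fun i _ => hw i)).mp h.symm
    simp only [Finset.mem_univ, forall_true_left] at hz
    simp [hz, hf0]
  · have key : f (∑ i, (w i / s) • p i) ≤ ∑ i, (w i / s) • f (p i) := by
      refine hconv.map_sum_le (fun i _ => div_nonneg (hw i) hs0) ?_ (fun i _ => trivial)
      rw [← Finset.sum_div, ← hs, div_self h.ne']
    simp only [smul_eq_mul] at key
    have hX : s • (∑ i, (w i / s) * p i) + (1 - s) • (0 : ℝ) = ∑ i, w i * p i := by
      rw [smul_eq_mul, smul_zero, add_zero, Finset.mul_sum]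
      exact Finset.sum_congr rfl fun i _ => by field_simp
    calc f (∑ i, w i * p i) = f (s • (∑ i, (w i / s) * p i) + (1 - s) • (0 : ℝ)) := by rw [hX]
      _ ≤ s • f (∑ i, (w i / s) * p i) + (1 - s) • f 0 :=
          hconv.2 (Set.mem_univ _) (Set.mem_univ _) hs0 (by linarith) (by ring)
      _ = s * f (∑ i, (w i / s) * p i) := by rw [hf0]; simp [smul_eq_mul]
      _ ≤ s * ∑ i, (w i / s) * f (p i) := mul_le_mul_of_nonneg_left key hs0
      _ = ∑ i, w i * f (p i) := by
          rw [Finset.mul_sum]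
          exact Finset.sum_congr rfl fun i _ => by field_simp


-- sum reordering helpers
lemma sum4_rot {M : Type*} [AddCommMonoid M] {α β γ δ : Type*} [Fintype α] [Fintype β]
    [Fintype γ] [Fintype δ] (f : α → β → γ → δ → M) :
    ∑ a, ∑ b, ∑ c, ∑ d, f a b c d = ∑ d, ∑ a, ∑ b, ∑ c, f a b c d := by
  calc ∑ a, ∑ b, ∑ c, ∑ d, f a b c d
      = ∑ a, ∑ b, ∑ d, ∑ c, f a b c d :=
        Finset.sum_congr rfl fun _ _ => Finset.sum_congr rfl fun _ _ => Finset.sum_comm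
    _ = ∑ a, ∑ d, ∑ b, ∑ c, f a b c d := Finset.sum_congr rfl fun _ _ => Finset.sum_comm
    _ = ∑ d, ∑ a, ∑ b, ∑ c, f a b c d := Finset.sum_comm

lemma sum4_swap_inner {M : Type*} [AddCommMonoid M] {α β γ δ : Type*} [Fintype α] [Fintype β]
    [Fintype γ] [Fintype δ] (f : α → β → γ → δ → M) :
    ∑ a, ∑ b, ∑ c, ∑ d, f a b c d = ∑ a, ∑ b, ∑ d, ∑ c, f a b c d :=
  Finset.sum_congr rfl fun _ _ => Finset.sum_congr rfl fun _ _ => Finset.sum_comm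

noncomputable def betaF {n m : ℕ} (a : Matrix (Fin n) (Fin n) ℂ)
    (W : Matrix (Fin n × Fin m) (Fin n × Fin m) ℂ) (r : Fin n × Fin m) (i : Fin n) (l : Fin m) :
    ℂ :=
  ∑ k, (starRingEnd ℂ) (a k i) * W (k, l) r

lemma entry_tensor {n m : ℕ} (a : Matrix (Fin n) (Fin n) ℂ)
    (X : Matrix (Fin n × Fin m) (Fin n × Fin m) ℂ) (i i' : Fin n) (j l : Fin m) :
    ((tensorOne aᴴ * X * tensorOne a) : Matrix (Fin n × Fin m) (Fin n × Fin m) ℂ) (i, j) (i', l)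
      = ∑ k, ∑ k', (starRingEnd ℂ) (a k i) * X (k, j) (k', l) * a k' i' := by
  simp only [Matrix.mul_apply, tensorOne, Matrix.of_apply, conjTranspose_apply,
    Fintype.sum_prod_type, mul_ite, ite_mul, mul_zero, zero_mul, mul_one, one_mul,
    Finset.sum_ite_eq, Finset.sum_ite_eq', Finset.mem_univ, if_true, Finset.sum_mul,
    Finset.mul_sum, Complex.star_def]
  exact Finset.sum_comm

lemma spec_entry {n m : ℕ} (W : Matrix (Fin n × Fin m) (Fin n × Fin m) ℂ)
    (g : (Fin n × Fin m) → ℂ) (p q : Fin n × Fin m) :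
    ((W * diagonal g * star W) : Matrix (Fin n × Fin m) (Fin n × Fin m) ℂ) p q
      = ∑ r, W p r * g r * (starRingEnd ℂ) (W q r) := by
  rw [Matrix.mul_apply]
  simp only [Matrix.mul_diagonal, Matrix.star_apply, Complex.star_def]

lemma L1 {n m : ℕ} (a : Matrix (Fin n) (Fin n) ℂ)
    (W : Matrix (Fin n × Fin m) (Fin n × Fin m) ℂ) (g : (Fin n × Fin m) → ℂ) (j l : Fin m) :
    ptrace1 (tensorOne aᴴ * (W * diagonal g * star W) * tensorOne a) j l
      = ∑ r, g r * ∑ i, betaF a W r i j * (starRingEnd ℂ) (betaF a W r i l) := by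
  show ∑ i : Fin n, _ = _
  calc ∑ i : Fin n, ((tensorOne aᴴ * (W * diagonal g * star W) * tensorOne a) :
          Matrix (Fin n × Fin m) (Fin n × Fin m) ℂ) (i, j) (i, l)
      = ∑ i : Fin n, ∑ k, ∑ k', ∑ r, (starRingEnd ℂ) (a k i) *
          (W (k, j) r * g r * (starRingEnd ℂ) (W (k', l) r)) * a k' i := by
        refine Finset.sum_congr rfl fun i _ => ?_
        rw [entry_tensor]
        refine Finset.sum_congr rfl fun k _ => Finset.sum_congr rfl fun k' _ => ?_
        rw [spec_entry, Finset.mul_sum, Finset.sum_mul]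
    _ = ∑ r, ∑ i : Fin n, ∑ k, ∑ k', (starRingEnd ℂ) (a k i) *
          (W (k, j) r * g r * (starRingEnd ℂ) (W (k', l) r)) * a k' i := sum4_rot _
    _ = ∑ r, g r * ∑ i, betaF a W r i j * (starRingEnd ℂ) (betaF a W r i l) := by
        refine Finset.sum_congr rfl fun r _ => ?_
        rw [Finset.mul_sum]
        refine Finset.sum_congr rfl fun i _ => ?_
        simp only [betaF, map_sum, _root_.map_mul, RingHomCompTriple.comp_apply,
          RingHom.id_apply, Finset.sum_mul, Finset.mul_sum, Complex.conj_conj]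
        rw [Finset.sum_comm]
        refine Finset.sum_congr rfl fun k _ => Finset.sum_congr rfl fun k' _ => by ring

lemma sum3_rot {M : Type*} [AddCommMonoid M] {α β γ : Type*} [Fintype α] [Fintype β] [Fintype γ]
    (f : α → β → γ → M) :
    ∑ a, ∑ b, ∑ c, f a b c = ∑ b, ∑ c, ∑ a, f a b c := by
  calc ∑ a, ∑ b, ∑ c, f a b c = ∑ b, ∑ a, ∑ c, f a b c := Finset.sum_comm
    _ = ∑ b, ∑ c, ∑ a, f a b c := Finset.sum_congr rfl fun _ _ => Finset.sum_comm

noncomputable def bbF {n m : ℕ} (a : Matrix (Fin n) (Fin n) ℂ)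
    (W : Matrix (Fin n × Fin m) (Fin n × Fin m) ℂ) (U : Matrix (Fin m) (Fin m) ℂ)
    (r : Fin n × Fin m) (i : Fin n) (j : Fin m) : ℂ :=
  ∑ l, (starRingEnd ℂ) (U l j) * betaF a W r i l

lemma betasum {n m : ℕ} (a : Matrix (Fin n) (Fin n) ℂ)
    (W : Matrix (Fin n × Fin m) (Fin n × Fin m) ℂ)
    (hW : ∀ p q : Fin n × Fin m, ∑ r, W p r * (starRingEnd ℂ) (W q r) = if p = q then 1 else 0)
    (i i' : Fin n) (l l' : Fin m) :
    ∑ r, betaF a W r i l * (starRingEnd ℂ) (betaF a W r i' l')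
      = if l = l' then ∑ k, (starRingEnd ℂ) (a k i) * a k i' else 0 := by
  calc ∑ r, betaF a W r i l * (starRingEnd ℂ) (betaF a W r i' l')
      = ∑ r, ∑ k, ∑ k', ((starRingEnd ℂ) (a k i) * a k' i') *
          (W (k, l) r * (starRingEnd ℂ) (W (k', l') r)) := by
        refine Finset.sum_congr rfl fun r _ => ?_
        simp only [betaF, map_sum, _root_.map_mul, Complex.conj_conj, Finset.sum_mul,
          Finset.mul_sum]
        rw [Finset.sum_comm]
        exact Finset.sum_congr rfl fun k _ => Finset.sum_congr rfl fun k' _ => by ring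
    _ = ∑ k, ∑ k', ∑ r, ((starRingEnd ℂ) (a k i) * a k' i') *
          (W (k, l) r * (starRingEnd ℂ) (W (k', l') r)) := sum3_rot _
    _ = ∑ k, ∑ k', ((starRingEnd ℂ) (a k i) * a k' i') *
          (if ((k : Fin n), l) = (k', l') then (1 : ℂ) else 0) := by
        refine Finset.sum_congr rfl fun k _ => Finset.sum_congr rfl fun k' _ => ?_
        rw [← Finset.mul_sum, hW]
    _ = if l = l' then ∑ k, (starRingEnd ℂ) (a k i) * a k i' else 0 := by
        simp only [Prod.mk.injEq, mul_ite, mul_one, mul_zero]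
        rw [Finset.sum_comm]
        simp [ite_and, Finset.sum_ite_irrel, Finset.sum_ite_eq, Finset.sum_ite_eq']

lemma claimB2 {n m : ℕ} (a : Matrix (Fin n) (Fin n) ℂ)
    (W : Matrix (Fin n × Fin m) (Fin n × Fin m) ℂ) (U : Matrix (Fin m) (Fin m) ℂ)
    (hW : ∀ p q : Fin n × Fin m, ∑ r, W p r * (starRingEnd ℂ) (W q r) = if p = q then 1 else 0)
    (i : Fin n) (j : Fin m) :
    ∑ r, bbF a W U r i j * (starRingEnd ℂ) (bbF a W U r i j)
      = (∑ l, (starRingEnd ℂ) (U l j) * U l j) * ∑ k, (starRingEnd ℂ) (a k i) * a k i := by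
  calc ∑ r, bbF a W U r i j * (starRingEnd ℂ) (bbF a W U r i j)
      = ∑ r, ∑ l, ∑ l', ((starRingEnd ℂ) (U l j) * U l' j) *
          (betaF a W r i l * (starRingEnd ℂ) (betaF a W r i l')) := by
        refine Finset.sum_congr rfl fun r _ => ?_
        simp only [bbF, map_sum, _root_.map_mul, Complex.conj_conj, Finset.sum_mul,
          Finset.mul_sum]
        rw [Finset.sum_comm]
        exact Finset.sum_congr rfl fun l _ => Finset.sum_congr rfl fun l' _ => by ring
    _ = ∑ l, ∑ l', ((starRingEnd ℂ) (U l j) * U l' j) *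
          ∑ r, betaF a W r i l * (starRingEnd ℂ) (betaF a W r i l') := by
        rw [sum3_rot]
        exact Finset.sum_congr rfl fun l _ => Finset.sum_congr rfl fun l' _ =>
          (Finset.mul_sum _ _ _).symm
    _ = (∑ l, (starRingEnd ℂ) (U l j) * U l j) * ∑ k, (starRingEnd ℂ) (a k i) * a k i := by
        rw [Finset.sum_mul]
        refine Finset.sum_congr rfl fun l _ => ?_
        rw [Finset.sum_eq_single l (fun l' _ hne => by
          rw [betasum a W hW, if_neg (Ne.symm hne), mul_zero]) (by simp)]
        rw [betasum a W hW, if_pos rfl]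

lemma claimC {n m : ℕ} (a : Matrix (Fin n) (Fin n) ℂ)
    (W : Matrix (Fin n × Fin m) (Fin n × Fin m) ℂ) (U : Matrix (Fin m) (Fin m) ℂ)
    (hU : ∀ l l' : Fin m, ∑ j, (starRingEnd ℂ) (U l j) * U l' j = if l = l' then 1 else 0)
    (r : Fin n × Fin m) (i : Fin n) :
    ∑ j, bbF a W U r i j * (starRingEnd ℂ) (bbF a W U r i j)
      = ∑ l, betaF a W r i l * (starRingEnd ℂ) (betaF a W r i l) := by
  calc ∑ j, bbF a W U r i j * (starRingEnd ℂ) (bbF a W U r i j)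
      = ∑ j, ∑ l, ∑ l', ((starRingEnd ℂ) (U l j) * U l' j) *
          (betaF a W r i l * (starRingEnd ℂ) (betaF a W r i l')) := by
        refine Finset.sum_congr rfl fun jj _ => ?_
        simp only [bbF, map_sum, _root_.map_mul, Complex.conj_conj, Finset.sum_mul,
          Finset.mul_sum]
        rw [Finset.sum_comm]
        exact Finset.sum_congr rfl fun l _ => Finset.sum_congr rfl fun l' _ => by ring
    _ = ∑ l, ∑ l', (∑ j, (starRingEnd ℂ) (U l j) * U l' j) *
          (betaF a W r i l * (starRingEnd ℂ) (betaF a W r i l')) := by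
        rw [sum3_rot]
        exact Finset.sum_congr rfl fun l _ => Finset.sum_congr rfl fun l' _ =>
          (Finset.sum_mul _ _ _).symm
    _ = ∑ l, betaF a W r i l * (starRingEnd ℂ) (betaF a W r i l) := by
        refine Finset.sum_congr rfl fun l _ => ?_
        rw [Finset.sum_eq_single l (fun l' _ hne => by
          rw [hU, if_neg (Ne.symm hne), zero_mul]) (by simp)]
        rw [hU, if_pos rfl, one_mul]

lemma quadA {n m : ℕ} (a : Matrix (Fin n) (Fin n) ℂ)
    (W : Matrix (Fin n × Fin m) (Fin n × Fin m) ℂ) (g : (Fin n × Fin m) → ℂ)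
    (K U : Matrix (Fin m) (Fin m) ℂ)
    (hKe : ∀ j l, K j l = ∑ r, g r * ∑ i, betaF a W r i j * (starRingEnd ℂ) (betaF a W r i l))
    (j : Fin m) :
    (star U * K * U) j j = ∑ r, g r * ∑ i, bbF a W U r i j * (starRingEnd ℂ) (bbF a W U r i j) := by
  calc (star U * K * U) j j
      = ∑ l', ∑ l, ∑ r, ∑ i, (starRingEnd ℂ) (U l j) *
          (g r * (betaF a W r i l * (starRingEnd ℂ) (betaF a W r i l'))) * U l' j := by
        simp only [Matrix.mul_apply, Matrix.star_apply, Complex.star_def, Finset.sum_mul]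
        refine Finset.sum_congr rfl fun l' _ => Finset.sum_congr rfl fun l _ => ?_
        rw [hKe]
        simp only [Finset.mul_sum, Finset.sum_mul]
        try exact Finset.sum_congr rfl fun r _ => Finset.sum_congr rfl fun i _ => by ring
    _ = ∑ r, ∑ i, ∑ l', ∑ l, (starRingEnd ℂ) (U l j) *
          (g r * (betaF a W r i l * (starRingEnd ℂ) (betaF a W r i l'))) * U l' j := by
        rw [sum4_rot, sum4_rot]
    _ = ∑ r, g r * ∑ i, bbF a W U r i j * (starRingEnd ℂ) (bbF a W U r i j) := by
        refine Finset.sum_congr rfl fun r _ => ?_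
        rw [Finset.mul_sum]
        refine Finset.sum_congr rfl fun i _ => ?_
        simp only [bbF, map_sum, _root_.map_mul, Complex.conj_conj, Finset.sum_mul,
          Finset.mul_sum]
        refine Finset.sum_congr rfl fun l' _ => Finset.sum_congr rfl fun l _ => by ring

lemma L2' {n m : ℕ} (a : Matrix (Fin n) (Fin n) ℂ)
    (X : Matrix (Fin n × Fin m) (Fin n × Fin m) ℂ) :
    (aᴴ * ptrace2 X * a).trace
      = ∑ j, ptrace1 (tensorOne aᴴ * X * tensorOne a) j j := by
  have hrhs : ∀ j : Fin m, ptrace1 (tensorOne aᴴ * X * tensorOne a) j j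
      = ∑ i, ∑ k, ∑ k', (starRingEnd ℂ) (a k i) * X (k, j) (k', j) * a k' i := by
    intro j
    show ∑ i : Fin n, _ = _
    exact Finset.sum_congr rfl fun i _ => entry_tensor a X i i j j
  simp only [hrhs]
  simp only [Matrix.trace, Matrix.diag, Matrix.mul_apply, ptrace2, Matrix.of_apply,
    conjTranspose_apply, Complex.star_def, Finset.sum_mul, Finset.mul_sum]
  rw [sum4_rot, sum4_swap_inner]
  try refine Finset.sum_congr rfl fun j _ => Finset.sum_congr rfl fun i _ =>
    Finset.sum_congr rfl fun k _ => Finset.sum_congr rfl fun k' _ => by ring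

set_option maxHeartbeats 1000000 in
/-- **Jensen's inequality for partial traces (subnormalized case).**
For `n, m ≥ 1`, a Hermitian `H` on `ℂⁿ ⊗ ℂᵐ`, a continuous convex `f : ℝ → ℝ` with `f(0) = 0`
and an `n×n` matrix `a` with `Tr(a* a) ≤ 1`, the matrix `K = Tr₁((a* ⊗ 1) H (a ⊗ 1))` is
Hermitian and `Tr f(K) ≤ Tr(a* · (Tr₂ f(H)) · a)`. -/
theorem trace_jensen_partial_trace_contractive {n m : ℕ} (hn : 1 ≤ n) (hm : 1 ≤ m)
    {H : Matrix (Fin n × Fin m) (Fin n × Fin m) ℂ} (hH : H.IsHermitian)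
    (f : ℝ → ℝ) (hf : Continuous f) (hconv : ConvexOn ℝ Set.univ f) (hf0 : f 0 = 0)
    (a : Matrix (Fin n) (Fin n) ℂ) (ha : (aᴴ * a).trace ≤ 1) :
    ∃ hK : (ptrace1 (tensorOne aᴴ * H * tensorOne a)).IsHermitian,
      (matFun hK f).trace ≤ (aᴴ * ptrace2 (matFun hH f) * a).trace := by
  classical
  have hMH : (tensorOne aᴴ * H * tensorOne a).IsHermitian := by
    have h := Matrix.isHermitian_conjTranspose_mul_mul (A := H) (tensorOne a) hH
    rwa [tensorOne_conjTranspose] at h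
  have hK : (ptrace1 (tensorOne aᴴ * H * tensorOne a)).IsHermitian := ptrace1_isHermitian hMH
  refine ⟨hK, ?_⟩
  set W : Matrix (Fin n × Fin m) (Fin n × Fin m) ℂ := (hH.eigenvectorUnitary :
    Matrix (Fin n × Fin m) (Fin n × Fin m) ℂ) with hWdef
  set U : Matrix (Fin m) (Fin m) ℂ := (hK.eigenvectorUnitary : Matrix (Fin m) (Fin m) ℂ)
    with hUdef
  set lam : (Fin n × Fin m) → ℝ := hH.eigenvalues with hlamdef
  set μ : Fin m → ℝ := hK.eigenvalues with hmudef
  have hWrow := unit_row hH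
  have hUcol := unit_col hK
  have hUrow : ∀ l l' : Fin m, ∑ j, (starRingEnd ℂ) (U l j) * U l' j
      = if l = l' then 1 else 0 := by
    intro l l'
    have h2 := unit_row hK l l'
    have h3 : (starRingEnd ℂ) (∑ j, U l j * (starRingEnd ℂ) (U l' j))
        = ∑ j, (starRingEnd ℂ) (U l j) * U l' j := by
      rw [map_sum]
      exact Finset.sum_congr rfl fun j _ => by
        rw [_root_.map_mul, Complex.conj_conj]
    rw [← h3, h2]
    split <;> simp
  -- entries of K
  have hKe : ∀ j l, ptrace1 (tensorOne aᴴ * H * tensorOne a) j l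
      = ∑ r, ((lam r : ℝ) : ℂ) * ∑ i, betaF a W r i j * (starRingEnd ℂ) (betaF a W r i l) := by
    intro j l
    conv_lhs => rw [hH.spectral_theorem]
    exact L1 a W _ j l
  -- claim A (complex)
  have hA : ∀ j, ((μ j : ℝ) : ℂ)
      = ∑ r, ((lam r : ℝ) : ℂ) * ∑ i, bbF a W U r i j * (starRingEnd ℂ) (bbF a W U r i j) := by
    intro j
    have hdiag : (star (hK.eigenvectorUnitary : Matrix (Fin m) (Fin m) ℂ)) *
        ptrace1 (tensorOne aᴴ * H * tensorOne a) * (hK.eigenvectorUnitary : Matrix (Fin m) (Fin m) ℂ)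
        = diagonal (RCLike.ofReal ∘ hK.eigenvalues) := by
      have := hK.conjStarAlgAut_star_eigenvectorUnitary
      simpa using this
    have h1 : ((star U * (ptrace1 (tensorOne aᴴ * H * tensorOne a)) * U :
          Matrix (Fin m) (Fin m) ℂ)) j j = ((μ j : ℝ) : ℂ) := by
      rw [hUdef, hdiag]
      simp [Matrix.diagonal_apply_eq]
      try rfl
    rw [← h1]
    exact quadA a W _ _ U hKe j
  -- claim A (real)
  have hAre : ∀ j, μ j
      = ∑ x : (Fin n × Fin m) × Fin n, Complex.normSq (bbF a W U x.1 x.2 j) * lam x.1 := by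
    intro j
    have h1 := hA j
    simp only [Complex.mul_conj] at h1
    have h2 : μ j = ∑ r, lam r * ∑ i, Complex.normSq (bbF a W U r i j) := by
      exact_mod_cast h1
    rw [h2]
    conv_rhs => rw [Fintype.sum_prod_type]
    exact Finset.sum_congr rfl fun r _ => by
      rw [Finset.mul_sum]
      exact Finset.sum_congr rfl fun i _ => mul_comm _ _
  -- claim C (real)
  have hCre : ∀ (r : Fin n × Fin m) (i : Fin n),
      ∑ j, Complex.normSq (bbF a W U r i j) = ∑ l, Complex.normSq (betaF a W r i l) := by
    intro r i
    have h1 := claimC a W U hUrow r i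
    simp only [Complex.mul_conj] at h1
    exact_mod_cast h1
  -- trace bound on a
  have hS : (∑ i, ∑ k, Complex.normSq (a k i)) ≤ 1 := by
    have htr : (aᴴ * a).trace = ((∑ i, ∑ k, Complex.normSq (a k i) : ℝ) : ℂ) := by
      simp only [Matrix.trace, Matrix.diag, Matrix.mul_apply, conjTranspose_apply,
        Complex.star_def]
      push_cast
      exact Finset.sum_congr rfl fun i _ => Finset.sum_congr rfl fun k _ =>
        (Complex.normSq_eq_conj_mul_self).symm
    rw [htr] at ha
    exact_mod_cast ha
  -- claim B (real)
  have hBre : ∀ j, (∑ x : (Fin n × Fin m) × Fin n, Complex.normSq (bbF a W U x.1 x.2 j)) ≤ 1 := by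
    intro j
    have hcb : ∑ r, ∑ i, (Complex.normSq (bbF a W U r i j) : ℂ)
        = ((∑ i, ∑ k, Complex.normSq (a k i) : ℝ) : ℂ) := by
      calc ∑ r, ∑ i, (Complex.normSq (bbF a W U r i j) : ℂ)
          = ∑ r, ∑ i, bbF a W U r i j * (starRingEnd ℂ) (bbF a W U r i j) := by
            exact Finset.sum_congr rfl fun r _ => Finset.sum_congr rfl fun i _ =>
              (Complex.mul_conj _).symm
        _ = ∑ i, ∑ r, bbF a W U r i j * (starRingEnd ℂ) (bbF a W U r i j) := Finset.sum_comm
        _ = ∑ i, (∑ l, (starRingEnd ℂ) (U l j) * U l j) *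
              ∑ k, (starRingEnd ℂ) (a k i) * a k i :=
            Finset.sum_congr rfl fun i _ => claimB2 a W U hWrow i j
        _ = ∑ i, ∑ k, (starRingEnd ℂ) (a k i) * a k i := by
            refine Finset.sum_congr rfl fun i _ => ?_
            rw [hUcol j j, if_pos rfl, one_mul]
        _ = ((∑ i, ∑ k, Complex.normSq (a k i) : ℝ) : ℂ) := by
            push_cast
            exact Finset.sum_congr rfl fun i _ => Finset.sum_congr rfl fun k _ =>
              (Complex.normSq_eq_conj_mul_self).symm
    have h2 : ∑ r, ∑ i, Complex.normSq (bbF a W U r i j)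
        = ∑ i, ∑ k, Complex.normSq (a k i) := by exact_mod_cast hcb
    rw [Fintype.sum_prod_type, h2]
    exact hS
  -- Jensen per eigenvalue of K
  have hjen : ∀ j, f (μ j)
      ≤ ∑ x : (Fin n × Fin m) × Fin n, Complex.normSq (bbF a W U x.1 x.2 j) * f (lam x.1) := by
    intro j
    rw [hAre j]
    exact jensen_sub hconv hf0 _ _ (fun x => Complex.normSq_nonneg _) (hBre j)
  -- LHS trace
  have hL : (matFun hK f).trace = ((∑ j, f (μ j) : ℝ) : ℂ) := by
    rw [show matFun hK f = hK.cfc f from rfl, cfc_trace hK f]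
    push_cast
    rfl
  -- RHS trace
  have hR : (aᴴ * ptrace2 (matFun hH f) * a).trace
      = ((∑ x : (Fin n × Fin m) × Fin n, f (lam x.1) *
          ∑ l, Complex.normSq (betaF a W x.1 x.2 l) : ℝ) : ℂ) := by
    rw [show matFun hH f
        = W * Matrix.diagonal (RCLike.ofReal ∘ f ∘ lam) * star W from rfl, L2']
    calc ∑ j, ptrace1 (tensorOne aᴴ * (W * Matrix.diagonal (RCLike.ofReal ∘ f ∘ lam) * star W) *
            tensorOne a) j j
        = ∑ j, ∑ r, ((f (lam r) : ℝ) : ℂ) *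
            ∑ i, betaF a W r i j * (starRingEnd ℂ) (betaF a W r i j) :=
          Finset.sum_congr rfl fun j _ => L1 a W _ j j
      _ = ∑ r, ((f (lam r) : ℝ) : ℂ) *
            ∑ i, ∑ j, betaF a W r i j * (starRingEnd ℂ) (betaF a W r i j) := by
          rw [Finset.sum_comm]
          refine Finset.sum_congr rfl fun r _ => ?_
          rw [← Finset.mul_sum]
          exact congrArg _ Finset.sum_comm
      _ = ((∑ x : (Fin n × Fin m) × Fin n, f (lam x.1) *
            ∑ l, Complex.normSq (betaF a W x.1 x.2 l) : ℝ) : ℂ) := by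
          push_cast
          conv_rhs => rw [Fintype.sum_prod_type]
          refine Finset.sum_congr rfl fun r _ => ?_
          rw [Finset.mul_sum]
          refine Finset.sum_congr rfl fun i _ => congrArg _ ?_
          exact Finset.sum_congr rfl fun l _ => (Complex.mul_conj _)
  rw [hL, hR]
  have final : (∑ j, f (μ j))
      ≤ ∑ x : (Fin n × Fin m) × Fin n, f (lam x.1) *
          ∑ l, Complex.normSq (betaF a W x.1 x.2 l) := by
    calc ∑ j, f (μ j)
        ≤ ∑ j, ∑ x : (Fin n × Fin m) × Fin n,
            Complex.normSq (bbF a W U x.1 x.2 j) * f (lam x.1) :=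
          Finset.sum_le_sum fun j _ => hjen j
      _ = ∑ x : (Fin n × Fin m) × Fin n, f (lam x.1) *
            ∑ j, Complex.normSq (bbF a W U x.1 x.2 j) := by
          rw [Finset.sum_comm]
          refine Finset.sum_congr rfl fun x _ => ?_
          rw [Finset.mul_sum]
          exact Finset.sum_congr rfl fun j _ => mul_comm _ _
      _ = ∑ x : (Fin n × Fin m) × Fin n, f (lam x.1) *
            ∑ l, Complex.normSq (betaF a W x.1 x.2 l) :=
          Finset.sum_congr rfl fun x _ => by rw [hCre x.1 x.2]
  exact_mod_cast final
end

section
/- Let H be a complex Hilbert space, let Φ : B(H) → B(H) be a positive unital linear map, let x ∈ B(H) be selfadjoint, let f : ℝ → ℝ be continuous and convex, and let ξ ∈ H be a unit vector. Then f(Re⟨Φ(x)ξ, ξ⟩) ≤ Re⟨Φ(f(x))ξ, ξ⟩, where f(x) denotes the continuous functional calculus of f applied to x. -/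
/-- Every convex function on `ℝ` has a subgradient at every point. -/
lemma exists_subgradient_of_convexOn {f : ℝ → ℝ} (hconv : ConvexOn ℝ Set.univ f) (t : ℝ) :
    ∃ c : ℝ, ∀ s : ℝ, f t + c * (s - t) ≤ f s := by
  set S : Set ℝ := (fun u => (f u - f t) / (u - t)) '' Set.Ioi t with hS
  have hne : S.Nonempty := ⟨_, ⟨t + 1, by simp, rfl⟩⟩
  have hbdd : BddBelow S := by
    refine ⟨(f (t - 1) - f t) / ((t - 1) - t), ?_⟩
    rintro _ ⟨u, hu, rfl⟩
    exact hconv.secant_mono (Set.mem_univ t) (Set.mem_univ _) (Set.mem_univ _)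
      (by norm_num) (ne_of_gt hu) (by linarith [Set.mem_Ioi.mp hu])
  refine ⟨sInf S, fun s => ?_⟩
  rcases lt_trichotomy s t with hst | hst | hst
  · have hle : (f s - f t) / (s - t) ≤ sInf S := by
      refine le_csInf hne ?_
      rintro _ ⟨u, hu, rfl⟩
      exact hconv.secant_mono (Set.mem_univ t) (Set.mem_univ _) (Set.mem_univ _)
        (ne_of_lt hst) (ne_of_gt hu) (by linarith [Set.mem_Ioi.mp hu])
    have h2 : sInf S * (s - t) ≤ f s - f t := by
      have := (div_le_iff_of_neg (by linarith : s - t < 0)).mp hle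
      linarith
    linarith
  · simp [hst]
  · have hle : sInf S ≤ (f s - f t) / (s - t) := csInf_le hbdd ⟨s, hst, rfl⟩
    have h2 : sInf S * (s - t) ≤ f s - f t := by
      have := (le_div_iff₀ (by linarith : (0:ℝ) < s - t)).mp hle
      linarith
    linarith

/-- **Vector-state Jensen inequality for positive unital maps on `B(H)`.**
If `Φ : B(H) → B(H)` is a positive unital linear map, `x` is selfadjoint, `f : ℝ → ℝ` is
continuous and convex, and `ξ` is a unit vector, then
`f(Re⟨Φ(x)ξ, ξ⟩) ≤ Re⟨Φ(f(x))ξ, ξ⟩`, where `f(x)` is given by the continuous functional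
calculus. -/
theorem jensen_vector_state_unital_positive_map
    {H : Type*} [NormedAddCommGroup H] [InnerProductSpace ℂ H] [CompleteSpace H]
    (Φ : (H →L[ℂ] H) →ₗ[ℂ] (H →L[ℂ] H))
    (hΦpos : ∀ y : H →L[ℂ] H, y.IsPositive → (Φ y).IsPositive)
    (hΦ1 : Φ 1 = 1)
    {x : H →L[ℂ] H} (hx : IsSelfAdjoint x)
    (f : ℝ → ℝ) (hf : Continuous f) (hconv : ConvexOn ℝ Set.univ f)
    (ξ : H) (hξ : ‖ξ‖ = 1) :
    f (Complex.re (inner ℂ ((Φ x) ξ) ξ)) ≤ Complex.re (inner ℂ ((Φ (cfc f x)) ξ) ξ) := by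
  set t₀ : ℝ := Complex.re (inner ℂ ((Φ x) ξ) ξ) with ht₀
  obtain ⟨c, hc⟩ := exists_subgradient_of_convexOn hconv t₀
  set a : ℝ := f t₀ - c * t₀ with ha
  set g : ℝ → ℝ := fun s => f s - (c * s + a) with hg
  have hg0 : ∀ s, 0 ≤ g s := fun s => by
    have := hc s; simp only [hg, ha]; ring_nf; nlinarith [hc s]
  have hgcont : Continuous g := hf.sub (by fun_prop)
  -- `cfc g x` is positive, being the square of a selfadjoint operator
  set h : ℝ → ℝ := fun s => Real.sqrt (g s) with hh
  have hhcont : Continuous h := Real.continuous_sqrt.comp hgcont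
  have hsq : cfc g x = cfc h x * cfc h x := by
    rw [← cfc_mul h h x hhcont.continuousOn hhcont.continuousOn]
    exact cfc_congr fun s _ => (Real.mul_self_sqrt (hg0 s)).symm
  have hsa : IsSelfAdjoint (cfc h x) := cfc_predicate h x
  have hpos : (cfc g x).IsPositive := by
    rw [hsq]
    have := (ContinuousLinearMap.isPositive_one (E := H) (𝕜 := ℂ)).adjoint_conj (cfc h x)
    simpa [ContinuousLinearMap.one_def, ← ContinuousLinearMap.star_eq_adjoint, hsa.star_eq,
      ContinuousLinearMap.mul_def] using this
  -- decomposition of `cfc g x`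
  have hdecomp : cfc g x = cfc f x - (c • x + a • (1 : H →L[ℂ] H)) := by
    have h1 : cfc g x = cfc f x - cfc (fun s => c * s + a) x :=
      cfc_sub f (fun s => c * s + a) x hf.continuousOn (by fun_prop)
    have h2 : cfc (fun s => c * s + a) x = c • x + a • (1 : H →L[ℂ] H) := by
      rw [cfc_add (a := x) (fun s => c * s) (fun _ => a) (by fun_prop) (by fun_prop),
        cfc_const a x, cfc_const_mul_id c x, Algebra.algebraMap_eq_smul_one]
    rw [h1, h2]
  -- apply Φ
  have hΦg : Φ (cfc g x) = Φ (cfc f x) - (c • Φ x + a • (1 : H →L[ℂ] H)) := by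
    rw [hdecomp, map_sub, map_add, Φ.map_smul_of_tower, Φ.map_smul_of_tower, hΦ1]
  have hineq : 0 ≤ Complex.re (inner ℂ ((Φ (cfc g x)) ξ) ξ) :=
    by have := (hΦpos _ hpos).inner_nonneg_left ξ; simpa using (Complex.le_def.mp this).1
  have hexp : Complex.re (inner ℂ ((Φ (cfc g x)) ξ) ξ)
      = Complex.re (inner ℂ ((Φ (cfc f x)) ξ) ξ) - (c * t₀ + a) := by
    rw [hΦg]
    simp only [ContinuousLinearMap.sub_apply, ContinuousLinearMap.add_apply,
      ContinuousLinearMap.smul_apply, ContinuousLinearMap.one_apply,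
      inner_sub_left, inner_add_left]
    rw [← algebraMap_smul ℂ c ((Φ x) ξ), ← algebraMap_smul ℂ a ξ]
    have h2 : inner ℂ (ξ : H) ξ = ((1:ℝ) : ℂ) := by
      rw [inner_self_eq_norm_sq_to_K (𝕜 := ℂ), hξ]; norm_num
    simp only [Complex.coe_algebraMap, inner_smul_left, Complex.conj_ofReal, h2,
      Complex.sub_re, Complex.add_re, Complex.mul_re, Complex.ofReal_re, Complex.ofReal_im,
      Complex.one_re, Complex.one_im, zero_mul, sub_zero, mul_one, mul_zero]
    rfl
  have hf0 : f t₀ = c * t₀ + a := by rw [ha]; ring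
  rw [hf0]
  linarith [hexp ▸ hineq]
end

section
/- Let H be a complex Hilbert space, let Φ : B(H) → B(H) be a positive linear map with Φ(1) ≤ 1 (a contractive positive map), let x ∈ B(H) be selfadjoint, let f : ℝ → ℝ be continuous and convex with f(0) = 0, and let ξ ∈ H be a unit vector. Then f(Re⟨Φ(x)ξ, ξ⟩) ≤ Re⟨Φ(f(x))ξ, ξ⟩, where f(x) denotes the continuous functional calculus of f applied to x. -/
lemma exists_support_line (f : ℝ → ℝ) (hconv : ConvexOn ℝ Set.univ f) (t₀ : ℝ) :
    ∃ a : ℝ, ∀ t, f t₀ + a * (t - t₀) ≤ f t := by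
  set L : Set ℝ := (fun t => (f t₀ - f t) / (t₀ - t)) '' Set.Iio t₀ with hL
  have hne : L.Nonempty := ⟨_, ⟨t₀ - 1, by simp, rfl⟩⟩
  have hslope : ∀ u t, u < t₀ → t₀ < t →
      (f t₀ - f u) / (t₀ - u) ≤ (f t - f t₀) / (t - t₀) := fun u t hu ht =>
    hconv.slope_mono_adjacent (Set.mem_univ u) (Set.mem_univ t) hu ht
  have hbdd : BddAbove L := by
    refine ⟨(f (t₀ + 1) - f t₀) / (t₀ + 1 - t₀), ?_⟩
    rintro s ⟨u, hu, rfl⟩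
    exact hslope u (t₀ + 1) hu (by linarith)
  refine ⟨sSup L, fun t => ?_⟩
  rcases lt_trichotomy t t₀ with h | h | h
  · have h1 : (f t₀ - f t) / (t₀ - t) ≤ sSup L := le_csSup hbdd ⟨t, h, rfl⟩
    have h2 : f t₀ - f t ≤ sSup L * (t₀ - t) := (div_le_iff₀ (by linarith)).mp h1
    have h3 : sSup L * (t - t₀) = -(sSup L * (t₀ - t)) := by ring
    linarith
  · simp [h]
  · have h1 : sSup L ≤ (f t - f t₀) / (t - t₀) :=
      csSup_le hne (by rintro s ⟨u, hu, rfl⟩; exact hslope u t hu h)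
    have h2 : sSup L * (t - t₀) ≤ f t - f t₀ := by
      rw [le_div_iff₀ (by linarith)] at h1; exact h1
    linarith

/-- **Vector-state Jensen inequality for contractive positive maps on `B(H)`.**
If `Φ : B(H) → B(H)` is a positive linear map with `Φ(1) ≤ 1` (i.e. `1 - Φ(1)` is a positive
operator), `x` is selfadjoint, `f : ℝ → ℝ` is continuous and convex with `f(0) = 0`, and `ξ`
is a unit vector, then `f(Re⟨Φ(x)ξ, ξ⟩) ≤ Re⟨Φ(f(x))ξ, ξ⟩`, where `f(x)` is given by the
continuous functional calculus. -/
theorem jensen_vector_state_contractive_positive_map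
    {H : Type*} [NormedAddCommGroup H] [InnerProductSpace ℂ H] [CompleteSpace H]
    (Φ : (H →L[ℂ] H) →ₗ[ℂ] (H →L[ℂ] H))
    (hΦpos : ∀ y : H →L[ℂ] H, y.IsPositive → (Φ y).IsPositive)
    (hΦ1 : (1 - Φ 1).IsPositive)
    {x : H →L[ℂ] H} (hx : IsSelfAdjoint x)
    (f : ℝ → ℝ) (hf : Continuous f) (hconv : ConvexOn ℝ Set.univ f) (hf0 : f 0 = 0)
    (ξ : H) (hξ : ‖ξ‖ = 1) :
    f (Complex.re (inner ℂ ((Φ x) ξ) ξ)) ≤ Complex.re (inner ℂ ((Φ (cfc f x)) ξ) ξ) := by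
  set t₀ : ℝ := Complex.re (inner ℂ ((Φ x) ξ) ξ) with ht₀
  obtain ⟨a, ha⟩ := exists_support_line f hconv t₀
  set b : ℝ := f t₀ - a * t₀ with hb
  have hab : ∀ t, a * t + b ≤ f t := fun t => by have := ha t; rw [hb]; linarith
  have hble : b ≤ 0 := by have := hab 0; simpa [hf0] using this
  -- operator inequality
  have hcfc_eq : cfc (fun t : ℝ => a * t + b) x = a • x + b • (1 : H →L[ℂ] H) := by
    rw [cfc_add x (fun t : ℝ => a * t) (fun _ : ℝ => b), cfc_const_mul a (fun t : ℝ => t) x,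
      cfc_id' ℝ x, cfc_const b x, Algebra.algebraMap_eq_smul_one]
  have hop : a • x + b • (1 : H →L[ℂ] H) ≤ cfc f x := by
    rw [← hcfc_eq]
    exact cfc_mono fun t _ => hab t
  have hdiff : (Φ (cfc f x) - Φ (a • x + b • (1 : H →L[ℂ] H))).IsPositive := by
    rw [← map_sub]
    exact hΦpos _ ((ContinuousLinearMap.le_def _ _).mp hop)
  have hmono : Complex.re (inner ℂ ((Φ (a • x + b • (1 : H →L[ℂ] H))) ξ) ξ) ≤
      Complex.re (inner ℂ ((Φ (cfc f x)) ξ) ξ) := by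
    have h0 := hdiff.re_inner_nonneg_left ξ
    simp only [ContinuousLinearMap.sub_apply, inner_sub_left, map_sub, RCLike.re_to_complex] at h0
    linarith
  -- compute the left inner product
  have hsmul : (a • x + b • (1 : H →L[ℂ] H)) = (a : ℂ) • x + (b : ℂ) • (1 : H →L[ℂ] H) := by
    norm_cast
  have hcomp : Complex.re (inner ℂ ((Φ (a • x + b • (1 : H →L[ℂ] H))) ξ) ξ)
      = a * t₀ + b * Complex.re (inner ℂ ((Φ 1) ξ) ξ) := by
    rw [hsmul, map_add, map_smul, map_smul]
    simp only [ContinuousLinearMap.add_apply, ContinuousLinearMap.coe_smul',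
      Pi.smul_apply, inner_add_left, inner_smul_left, Complex.add_re]
    simp [Complex.conj_ofReal, Complex.re_ofReal_mul, mul_comm, ht₀]
  -- bounds on s = Re⟨Φ(1)ξ,ξ⟩
  set s : ℝ := Complex.re (inner ℂ ((Φ 1) ξ) ξ) with hs
  have hs1 : s ≤ 1 := by
    have h0 := hΦ1.re_inner_nonneg_left ξ
    simp only [ContinuousLinearMap.sub_apply, inner_sub_left, ContinuousLinearMap.one_apply,
      Complex.sub_re, RCLike.re_to_complex] at h0
    have : Complex.re (inner ℂ ξ ξ : ℂ) = 1 := by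
      rw [inner_self_eq_norm_sq_to_K (𝕜 := ℂ)]
      simp [hξ]
    rw [hs]; linarith
  have hs0 : 0 ≤ s := by
    have := (hΦpos 1 ContinuousLinearMap.isPositive_one).re_inner_nonneg_left ξ
    exact this
  have hbs : b ≤ b * s := by nlinarith
  have : f t₀ = a * t₀ + b := by rw [hb]; ring
  calc f t₀ = a * t₀ + b := this
    _ ≤ a * t₀ + b * s := by linarith
    _ = Complex.re (inner ℂ ((Φ (a • x + b • (1 : H →L[ℂ] H))) ξ) ξ) := (hcomp).symm
    _ ≤ _ := hmono
end
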